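/- Soundness and completeness of C_n with respect to RM_{C_n}: for any set of formulas Γ ∪ {φ} over Σ, Γ ⊢_{C_n} φ if and only if for every ν ∈ F_{C_n} with ν[Γ] ⊆ D_n one has ν(φ) ∈ D_n. (This may be derived from the corresponding soundness/completeness of C_n with respect to bivaluations together with the translations between bivaluations and F_{C_n} valuations.) -/

import Mathlib

/-- Formulas over the signature Σ (¬ unary; ∧, ∨, → binary). -/
inductive PFs : Type
  | var : ℕ → PFs
  | neg : PFs → PFs
  | and : PFs → PFs → PFs
  | or : PFs → PFs → PFs
  | imp : PFs → PFs → PFs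

/-- `pw α k` is `α^k`: `α^0 = α` and `α^{j+1} = ¬(α^j ∧ ¬(α^j))`. -/
def pw (α : PFs) : ℕ → PFs
  | 0 => α
  | k + 1 => PFs.neg ((pw α k).and (PFs.neg (pw α k)))

/-- Snapshots for `C_n`: `(n+1)`-tuples over `2` with at most one coordinate
equal to `0` (i.e. `false`). -/
def Snap (n : ℕ) : Type :=
  {z : Fin (n + 1) → Bool // ∀ i j : Fin (n + 1), z i = false → z j = false → i = j}

/-- `T_n = (1,0,1,…,1)`. -/
def Tval (n : ℕ) : Snap n :=
  ⟨fun i => decide ((i : ℕ) ≠ 1), by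
    intro i j hi hj
    simp only [decide_eq_false_iff_not, not_not] at hi hj
    exact Fin.ext (hi.trans hj.symm)⟩

/-- `F_n = (0,1,1,…,1)`. -/
def Fval (n : ℕ) : Snap n :=
  ⟨fun i => decide ((i : ℕ) ≠ 0), by
    intro i j hi hj
    simp only [decide_eq_false_iff_not, not_not] at hi hj
    exact Fin.ext (hi.trans hj.symm)⟩

/-- `t^n_i`: all coordinates `1` except (when it exists) the one in position
`i+3`, i.e. index `i+2`; for `i = n-1` all coordinates equal `1`. -/
def tval (n i : ℕ) : Snap n :=
  ⟨fun j => decide ((j : ℕ) ≠ i + 2), by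
    intro j j' hj hj'
    simp only [decide_eq_false_iff_not, not_not] at hj hj'
    exact Fin.ext (hj.trans hj'.symm)⟩

/-- Designated values `D_n = B_n \ {F_n} = {z : z₁ = 1}`. -/
def Dn (n : ℕ) : Set (Snap n) := {z | z.1 0 = true}

/-- Boolean values `Boo_n = {z : z₁ ∧ z₂ = 0}`. -/
def BooN (n : ℕ) : Set (Snap n) := {z | (z.1 0 && z.1 1) = false}

/-- Inconsistent values `I_n = B_n \ {T_n, F_n}`. -/
def InN (n : ℕ) : Set (Snap n) := {z | z ≠ Tval n ∧ z ≠ Fval n}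

/-- `¬̃ z = {w : w₁ = z₂ and w₂ ≤ z₁}`. -/
def negN {n : ℕ} (z : Snap n) : Set (Snap n) :=
  {w | w.1 0 = z.1 1 ∧ (w.1 1 = true → z.1 0 = true)}

open Classical in
/-- `z #̃ w`: Boolean (inside `Boo_n`) when both arguments are Boolean values,
non-deterministic (first coordinate determined classically) otherwise. -/
noncomputable def binN {n : ℕ} (f : Bool → Bool → Bool) (z w : Snap n) :
    Set (Snap n) :=
  if z ∈ BooN n ∧ w ∈ BooN n then
    {u | u ∈ BooN n ∧ u.1 0 = f (z.1 0) (w.1 0)}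
  else
    {u | u.1 0 = f (z.1 0) (w.1 0)}

/-- `ν` is a multialgebra homomorphism into `A_{C_n}`. -/
def IsHomN (n : ℕ) (ν : PFs → Snap n) : Prop :=
  (∀ α, ν (PFs.neg α) ∈ negN (ν α)) ∧
  (∀ α β, ν (PFs.and α β) ∈ binN (· && ·) (ν α) (ν β)) ∧
  (∀ α β, ν (PFs.or α β) ∈ binN (· || ·) (ν α) (ν β)) ∧
  (∀ α β, ν (PFs.imp α β) ∈ binN (fun a b => !a || b) (ν α) (ν β))

/-- `ν ∈ F_{C_n}`: a homomorphism satisfying the restrictions on valuations. -/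
def FCn (n : ℕ) (ν : PFs → Snap n) : Prop :=
  IsHomN n ν ∧
  (∀ α, ν α = tval n 0 → ν (PFs.and α (PFs.neg α)) = Tval n) ∧
  (∀ α k, 1 ≤ k → k ≤ n - 1 → ν α = tval n k →
    ν (PFs.and α (PFs.neg α)) ∈ InN n ∧ ν (pw α 1) = tval n (k - 1))

/-- `pc α j` is `α^{(j)}`: `α^{(1)} = α^1` and `α^{(j+1)} = α^{(j)} ∧ α^{j+1}`. -/
def pc (α : PFs) : ℕ → PFs
  | 0 => α
  | 1 => pw α 1
  | j + 2 => (pc α (j + 1)).and (pw α (j + 2))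

/-- Derivability in da Costa's calculus `C_n` (Ax1–Ax10, bc_n, P_n, MP). -/
inductive ProvCn (n : ℕ) (Γ : Set PFs) : PFs → Prop
  | prem {φ} : φ ∈ Γ → ProvCn n Γ φ
  | ax1 (α β : PFs) : ProvCn n Γ (α.imp (β.imp α))
  | ax2 (α β γ : PFs) :
      ProvCn n Γ ((α.imp (β.imp γ)).imp ((α.imp β).imp (α.imp γ)))
  | ax3 (α β : PFs) : ProvCn n Γ (α.imp (β.imp (α.and β)))
  | ax4 (α β : PFs) : ProvCn n Γ ((α.and β).imp α)
  | ax5 (α β : PFs) : ProvCn n Γ ((α.and β).imp β)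
  | ax6 (α β : PFs) : ProvCn n Γ (α.imp (α.or β))
  | ax7 (α β : PFs) : ProvCn n Γ (β.imp (α.or β))
  | ax8 (α β γ : PFs) :
      ProvCn n Γ ((α.imp γ).imp ((β.imp γ).imp ((α.or β).imp γ)))
  | ax9 (α : PFs) : ProvCn n Γ (α.or α.neg)
  | ax10 (α : PFs) : ProvCn n Γ (α.neg.neg.imp α)
  | bcn (α β : PFs) : ProvCn n Γ ((pc α n).imp (α.imp (α.neg.imp β)))
  | pn (α β : PFs) : ProvCn n Γ (((pc α n).and (pc β n)).imp
      ((pc (α.and β) n).and ((pc (α.or β) n).and (pc (α.imp β) n))))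
  | mp {α β : PFs} : ProvCn n Γ (α.imp β) → ProvCn n Γ α → ProvCn n Γ β


/-! ### Syntactic machinery for `ProvCn` -/

theorem provMono {n : ℕ} {Γ Γ' : Set PFs} (h : Γ ⊆ Γ') {φ : PFs}
    (hp : ProvCn n Γ φ) : ProvCn n Γ' φ := by
  induction hp with
  | prem hφ => exact .prem (h hφ)
  | ax1 α β => exact .ax1 α β
  | ax2 α β γ => exact .ax2 α β γ
  | ax3 α β => exact .ax3 α β
  | ax4 α β => exact .ax4 α β
  | ax5 α β => exact .ax5 α β
  | ax6 α β => exact .ax6 α β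
  | ax7 α β => exact .ax7 α β
  | ax8 α β γ => exact .ax8 α β γ
  | ax9 α => exact .ax9 α
  | ax10 α => exact .ax10 α
  | bcn α β => exact .bcn α β
  | pn α β => exact .pn α β
  | mp _ _ ih1 ih2 => exact ih1.mp ih2

theorem provId {n : ℕ} {Γ : Set PFs} (α : PFs) : ProvCn n Γ (α.imp α) :=
  ((ProvCn.ax2 α (α.imp α) α).mp (ProvCn.ax1 α (α.imp α))).mp (ProvCn.ax1 α α)

theorem deduction {n : ℕ} {Γ : Set PFs} {α β : PFs}
    (h : ProvCn n (insert α Γ) β) : ProvCn n Γ (α.imp β) := by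
  induction h with
  | prem hφ =>
      rcases hφ with hφ | hφ
      · rw [hφ]; exact provId α
      · exact (ProvCn.ax1 _ α).mp (.prem hφ)
  | ax1 a b => exact (ProvCn.ax1 _ α).mp (.ax1 a b)
  | ax2 a b c => exact (ProvCn.ax1 _ α).mp (.ax2 a b c)
  | ax3 a b => exact (ProvCn.ax1 _ α).mp (.ax3 a b)
  | ax4 a b => exact (ProvCn.ax1 _ α).mp (.ax4 a b)
  | ax5 a b => exact (ProvCn.ax1 _ α).mp (.ax5 a b)
  | ax6 a b => exact (ProvCn.ax1 _ α).mp (.ax6 a b)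
  | ax7 a b => exact (ProvCn.ax1 _ α).mp (.ax7 a b)
  | ax8 a b c => exact (ProvCn.ax1 _ α).mp (.ax8 a b c)
  | ax9 a => exact (ProvCn.ax1 _ α).mp (.ax9 a)
  | ax10 a => exact (ProvCn.ax1 _ α).mp (.ax10 a)
  | bcn a b => exact (ProvCn.ax1 _ α).mp (.bcn a b)
  | pn a b => exact (ProvCn.ax1 _ α).mp (.pn a b)
  | mp _ _ ih1 ih2 => exact ((ProvCn.ax2 α _ _).mp ih1).mp ih2

theorem provCut {n : ℕ} {Γ : Set PFs} {α β : PFs}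
    (h1 : ProvCn n Γ α) (h2 : ProvCn n (insert α Γ) β) : ProvCn n Γ β :=
  (deduction h2).mp h1

theorem provCases {n : ℕ} {Γ : Set PFs} {α β γ : PFs}
    (h : ProvCn n Γ (α.or β)) (h1 : ProvCn n (insert α Γ) γ)
    (h2 : ProvCn n (insert β Γ) γ) : ProvCn n Γ γ :=
  (((ProvCn.ax8 α β γ).mp (deduction h1)).mp (deduction h2)).mp h

theorem provAndI {n : ℕ} {Γ : Set PFs} {α β : PFs}
    (h1 : ProvCn n Γ α) (h2 : ProvCn n Γ β) : ProvCn n Γ (α.and β) :=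
  ((ProvCn.ax3 α β).mp h1).mp h2

theorem provAnd1 {n : ℕ} {Γ : Set PFs} {α β : PFs}
    (h : ProvCn n Γ (α.and β)) : ProvCn n Γ α :=
  (ProvCn.ax4 α β).mp h

theorem provAnd2 {n : ℕ} {Γ : Set PFs} {α β : PFs}
    (h : ProvCn n Γ (α.and β)) : ProvCn n Γ β :=
  (ProvCn.ax5 α β).mp h

theorem provImpTrans {n : ℕ} {Γ : Set PFs} {α β γ : PFs}
    (h1 : ProvCn n Γ (α.imp β)) (h2 : ProvCn n Γ (β.imp γ)) :
    ProvCn n Γ (α.imp γ) := by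
  apply deduction
  exact (provMono (Set.subset_insert _ _) h2).mp
    ((provMono (Set.subset_insert _ _) h1).mp (.prem (Set.mem_insert _ _)))

/-- `⊢ ¬(α^j) → (α ∧ ¬α)` for `j ≥ 1`. -/
theorem negPow {n : ℕ} {Γ : Set PFs} (α : PFs) :
    ∀ j : ℕ, 1 ≤ j → ProvCn n Γ ((pw α j).neg.imp (α.and α.neg))
  | 1, _ => ProvCn.ax10 (α.and α.neg)
  | (j+2), _ => by
      have h1 : ProvCn n Γ ((pw α (j+2)).neg.imp ((pw α (j+1)).and (pw α (j+1)).neg)) :=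
        ProvCn.ax10 _
      have h2 : ProvCn n Γ (((pw α (j+1)).and (pw α (j+1)).neg).imp (pw α (j+1)).neg) :=
        ProvCn.ax5 _ _
      exact provImpTrans (provImpTrans h1 h2) (negPow α (j+1) (by omega))

/-- `α^1, …, α^m ∈ Δ` implies `Δ ⊢ α^{(m)}`. -/
theorem provPc {n : ℕ} {Δ : Set PFs} (α : PFs) :
    ∀ m : ℕ, 1 ≤ m → (∀ i, 1 ≤ i → i ≤ m → pw α i ∈ Δ) → ProvCn n Δ (pc α m)
  | 1, _, h => .prem (h 1 le_rfl le_rfl)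
  | (m+2), _, h => by
      have ih : ProvCn n Δ (pc α (m+1)) :=
        provPc α (m+1) (by omega) (fun i h1 h2 => h i h1 (by omega))
      exact provAndI ih (.prem (h (m+2) (by omega) le_rfl))

/-- `⊢ (α^j ∧ ¬α^j) → α`. -/
theorem casePow {n : ℕ} {Γ : Set PFs} (α : PFs) :
    ∀ j : ℕ, ProvCn n Γ (((pw α j).and (pw α j).neg).imp α)
  | 0 => ProvCn.ax4 α α.neg
  | (j+1) => provImpTrans (ProvCn.ax5 _ _)
      (provImpTrans (negPow α (j+1) (by omega)) (ProvCn.ax4 α α.neg))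

/-- The key classical-positive theorem: `⊢ α ∨ (α → β)` in `C_n` (n ≥ 1). -/
theorem provPeirceOr {n : ℕ} (hn : 1 ≤ n) {Γ : Set PFs} (α β : PFs) :
    ProvCn n Γ (α.or (α.imp β)) := by
  -- downward induction: if the context contains α^1,…,α^{n-d}, the goal is provable
  have aux : ∀ d : ℕ, ∀ Δ : Set PFs, Γ ⊆ Δ →
      (∀ i, 1 ≤ i → i ≤ n - d → pw α i ∈ Δ) → ProvCn n Δ (α.or (α.imp β)) := by
    intro d
    induction d with
    | zero =>
        intro Δ _ hΔ
        -- context has α^1,…,α^n : use bc_n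
        have hpc : ProvCn n Δ (pc α n) := provPc α n hn (by simpa using hΔ)
        have hbc : ProvCn n Δ (α.imp (α.neg.imp β)) := (ProvCn.bcn α β).mp hpc
        refine provCases (ProvCn.ax9 α) (.mp (.ax6 α _) (.prem (Set.mem_insert _ _))) ?_
        -- case ¬α : show α → β
        refine .mp (.ax7 α _) (deduction ?_)
        have hα : ProvCn n (insert α (insert α.neg Δ)) α := .prem (Set.mem_insert _ _)
        have hnα : ProvCn n (insert α (insert α.neg Δ)) α.neg :=
          .prem (Set.mem_insert_of_mem _ (Set.mem_insert _ _))
        have hbc' : ProvCn n (insert α (insert α.neg Δ)) (α.imp (α.neg.imp β)) :=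
          provMono (fun _ h => Set.mem_insert_of_mem _ (Set.mem_insert_of_mem _ h)) hbc
        exact (hbc'.mp hα).mp hnα
    | succ d ih =>
        intro Δ hΓ hΔ
        by_cases hd : n - (d+1) = n - d
        · exact ih Δ hΓ (fun i h1 h2 => hΔ i h1 (hd ▸ h2))
        · -- m := n - d ≥ 1, context has α^1,…,α^{m-1}
          set m := n - d with hm
          have hm1 : 1 ≤ m := by omega
          have hmd : n - (d+1) = m - 1 := by omega
          -- case split on (α^{m-1} ∧ ¬α^{m-1}) ∨ α^m
          have hsplit : ProvCn n Δ (((pw α (m-1)).and (pw α (m-1)).neg).or (pw α m)) := by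
            have : pw α m = ((pw α (m-1)).and (pw α (m-1)).neg).neg := by
              have : m = (m - 1) + 1 := by omega
              rw [this]; rfl
            rw [this]; exact ProvCn.ax9 _
          refine provCases hsplit ?_ ?_
          · -- case α^{m-1} ∧ ¬α^{m-1} : get α
            have hmem : ProvCn n (insert ((pw α (m-1)).and (pw α (m-1)).neg) Δ)
                ((pw α (m-1)).and (pw α (m-1)).neg) := .prem (Set.mem_insert _ _)
            have hα : ProvCn n (insert ((pw α (m-1)).and (pw α (m-1)).neg) Δ) α :=
              (casePow α (m-1)).mp hmem
            exact (ProvCn.ax6 α (α.imp β)).mp hα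
          · -- case α^m : extend the context
            refine ih (insert (pw α m) Δ) (fun _ h => Set.mem_insert_of_mem _ (hΓ h)) ?_
            intro i h1 h2
            by_cases him : i = m
            · exact him ▸ Set.mem_insert _ _
            · exact Set.mem_insert_of_mem _ (hΔ i h1 (by omega))
  have := aux n Γ (le_refl _) (fun i h1 h2 => absurd (h1.trans h2) (by omega))
  exact this


/-! ### Lindenbaum construction -/

theorem finitePremises {n : ℕ} {Γ : Set PFs} {φ : PFs} (h : ProvCn n Γ φ) :
    ∃ Γ₀ : Finset PFs, ↑Γ₀ ⊆ Γ ∧ ProvCn n (↑Γ₀ : Set PFs) φ := by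
  classical
  induction h with
  | prem hφ => exact ⟨{_}, by simpa using hφ, .prem (by simp)⟩
  | ax1 α β => exact ⟨∅, by simp, .ax1 α β⟩
  | ax2 α β γ => exact ⟨∅, by simp, .ax2 α β γ⟩
  | ax3 α β => exact ⟨∅, by simp, .ax3 α β⟩
  | ax4 α β => exact ⟨∅, by simp, .ax4 α β⟩
  | ax5 α β => exact ⟨∅, by simp, .ax5 α β⟩
  | ax6 α β => exact ⟨∅, by simp, .ax6 α β⟩
  | ax7 α β => exact ⟨∅, by simp, .ax7 α β⟩
  | ax8 α β γ => exact ⟨∅, by simp, .ax8 α β γ⟩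
  | ax9 α => exact ⟨∅, by simp, .ax9 α⟩
  | ax10 α => exact ⟨∅, by simp, .ax10 α⟩
  | bcn α β => exact ⟨∅, by simp, .bcn α β⟩
  | pn α β => exact ⟨∅, by simp, .pn α β⟩
  | mp h1 h2 ih1 ih2 =>
      obtain ⟨A, hA, pA⟩ := ih1
      obtain ⟨B, hB, pB⟩ := ih2
      refine ⟨A ∪ B, ?_, ?_⟩
      · intro x hx
        rcases Finset.mem_union.mp (by exact_mod_cast hx) with h | h
        · exact hA (by exact_mod_cast h)
        · exact hB (by exact_mod_cast h)
      · have sA : (↑A : Set PFs) ⊆ ↑(A ∪ B) := by intro x hx; simp_all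
        have sB : (↑B : Set PFs) ⊆ ↑(A ∪ B) := by intro x hx; simp_all
        exact (provMono sA pA).mp (provMono sB pB)

theorem chainBound {c : Set (Set PFs)} (hc : IsChain (· ⊆ ·) c) (hne : c.Nonempty) :
    ∀ t : Finset PFs, ↑t ⊆ ⋃₀ c → ∃ s ∈ c, ↑t ⊆ s := by
  classical
  intro t
  induction t using Finset.induction_on with
  | empty => exact fun _ => ⟨hne.choose, hne.choose_spec, by simp⟩
  | @insert a t ha ih =>
      intro hins
      obtain ⟨s, hs, hts⟩ := ih (fun x hx => hins (by simp_all))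
      obtain ⟨u, hu, hau⟩ : ∃ u ∈ c, a ∈ u := by
        have : a ∈ ⋃₀ c := hins (by simp)
        simpa using this
      rcases hc.total hs hu with h | h
      · refine ⟨u, hu, ?_⟩
        intro x hx
        rcases Finset.mem_insert.mp (by exact_mod_cast hx) with rfl | hx'
        · exact hau
        · exact h (hts (by exact_mod_cast hx'))
      · refine ⟨s, hs, ?_⟩
        intro x hx
        rcases Finset.mem_insert.mp (by exact_mod_cast hx) with rfl | hx'
        · exact h hau
        · exact hts (by exact_mod_cast hx')

/-- A maximal theory avoiding `φ`. -/
theorem lindenbaum {n : ℕ} {Γ : Set PFs} {φ : PFs} (h : ¬ ProvCn n Γ φ) :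
    ∃ Δ : Set PFs, Γ ⊆ Δ ∧ ¬ ProvCn n Δ φ ∧
      ∀ a : PFs, a ∉ Δ → ProvCn n (insert a Δ) φ := by
  classical
  set S : Set (Set PFs) := {Δ | ¬ ProvCn n Δ φ} with hS
  have H : ∀ c ⊆ S, IsChain (· ⊆ ·) c → c.Nonempty →
      ∃ ub ∈ S, ∀ s ∈ c, s ⊆ ub := by
    intro c hcS hchain hne
    refine ⟨⋃₀ c, ?_, fun s hs => Set.subset_sUnion_of_mem hs⟩
    intro hp
    obtain ⟨t, ht, pt⟩ := finitePremises hp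
    obtain ⟨s, hs, hts⟩ := chainBound hchain hne t ht
    exact hcS hs (provMono hts pt)
  obtain ⟨Δ, hΓΔ, hΔS, hmax⟩ := zorn_subset_nonempty S H Γ h
  refine ⟨Δ, hΓΔ, hΔS, ?_⟩
  intro a ha
  by_contra hnp
  have h1 : insert a Δ ∈ S := hnp
  have h2 := hmax h1 (Set.subset_insert a Δ)
  exact ha (h2 (Set.mem_insert a Δ))

section MaxTheory

variable {n : ℕ} {Δ : Set PFs} {φ : PFs}
variable (hND : ¬ ProvCn n Δ φ)
variable (hM : ∀ a : PFs, a ∉ Δ → ProvCn n (insert a Δ) φ)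

include hND hM in
theorem maxClosed {α : PFs} (h : ProvCn n Δ α) : α ∈ Δ := by
  by_contra ha
  exact hND (provCut h (hM α ha))

include hND hM in
theorem maxDisj {α β : PFs} (h : (α.or β) ∈ Δ) : α ∈ Δ ∨ β ∈ Δ := by
  by_contra hab
  push_neg at hab
  exact hND (provCases (.prem h) (hM α hab.1) (hM β hab.2))

include hND hM in
theorem maxAnd {α β : PFs} : (α.and β) ∈ Δ ↔ (α ∈ Δ ∧ β ∈ Δ) := by
  constructor
  · intro h
    exact ⟨maxClosed hND hM (provAnd1 (.prem h)), maxClosed hND hM (provAnd2 (.prem h))⟩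
  · rintro ⟨h1, h2⟩
    exact maxClosed hND hM (provAndI (.prem h1) (.prem h2))

include hND hM in
theorem maxOr {α β : PFs} : (α.or β) ∈ Δ ↔ (α ∈ Δ ∨ β ∈ Δ) := by
  constructor
  · exact maxDisj hND hM
  · rintro (h | h)
    · exact maxClosed hND hM ((ProvCn.ax6 α β).mp (.prem h))
    · exact maxClosed hND hM ((ProvCn.ax7 α β).mp (.prem h))

include hND hM in
theorem maxImp (hn : 1 ≤ n) {α β : PFs} : (α.imp β) ∈ Δ ↔ (α ∉ Δ ∨ β ∈ Δ) := by
  constructor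
  · intro h
    by_cases ha : α ∈ Δ
    · exact Or.inr (maxClosed hND hM ((ProvCn.prem h).mp (.prem ha)))
    · exact Or.inl ha
  · rintro (h | h)
    · rcases maxDisj hND hM (maxClosed hND hM (provPeirceOr hn α β)) with h' | h'
      · exact absurd h' h
      · exact h'
    · exact maxClosed hND hM ((ProvCn.ax1 β α).mp (.prem h))

include hND hM in
theorem maxNegNeg {α : PFs} (h : α.neg.neg ∈ Δ) : α ∈ Δ :=
  maxClosed hND hM ((ProvCn.ax10 α).mp (.prem h))

include hND hM in
theorem maxNeg {α : PFs} (h : α.neg ∉ Δ) : α ∈ Δ := by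
  rcases maxDisj hND hM (maxClosed hND hM (ProvCn.ax9 α)) with h' | h'
  · exact h'
  · exact absurd h' h

include hND in
omit hM in
theorem maxNotPhi : φ ∉ Δ := fun h => hND (.prem h)

include hND in
omit hM in
theorem maxBcn {α : PFs} (h : pc α n ∈ Δ) (h1 : α ∈ Δ) (h2 : α.neg ∈ Δ) : False :=
  hND ((((ProvCn.bcn α φ).mp (.prem h)).mp (.prem h1)).mp (.prem h2))

include hND hM in
theorem maxPn {α β : PFs} (h1 : pc α n ∈ Δ) (h2 : pc β n ∈ Δ) :
    pc (α.and β) n ∈ Δ ∧ pc (α.or β) n ∈ Δ ∧ pc (α.imp β) n ∈ Δ := by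
  have h := (ProvCn.pn α β).mp (provAndI (.prem h1) (.prem h2))
  exact ⟨maxClosed hND hM (provAnd1 h),
    maxClosed hND hM (provAnd1 (provAnd2 h)),
    maxClosed hND hM (provAnd2 (provAnd2 h))⟩

end MaxTheory


/-! ### Facts about powers and bivaluation-style functions -/

@[simp] theorem pw_zero (α : PFs) : pw α 0 = α := rfl

theorem pw_one (γ : PFs) : pw γ 1 = (γ.and γ.neg).neg := rfl

theorem pw_succ (α : PFs) (k : ℕ) :
    pw α (k+1) = ((pw α k).and (pw α k).neg).neg := rfl

theorem pw_add (α : PFs) (a : ℕ) : ∀ c : ℕ, pw (pw α a) c = pw α (a + c)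
  | 0 => rfl
  | (c+1) => by rw [pw_succ, pw_add α a c]; rfl

section BFacts

variable {b : PFs → Bool}
variable (hand : ∀ α β, b (α.and β) = (b α && b β))
variable (hb4 : ∀ α, b α.neg.neg = true → b α = true)
variable (hb5 : ∀ α, b α.neg = false → b α = true)

include hand hb5 in
theorem bF1a {γ : PFs} (h : (b γ && b γ.neg) = false) : b (pw γ 1) = true := by
  by_contra hc
  have := hb5 (γ.and γ.neg) (by simpa [pw_one] using hc)
  rw [hand] at this
  simp [this] at h

include hb4 in
theorem bF1b {γ : PFs} (h : b (γ.and γ.neg) = false) : b (pw γ 1).neg = false := by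
  by_contra hc
  have := hb4 (γ.and γ.neg) (by simpa [pw_one] using hc)
  simp [this] at h

include hand hb4 hb5 in
theorem bF2 {γ : PFs} (h : (b γ && b γ.neg) = false) :
    ∀ j : ℕ, 1 ≤ j → b (pw γ j) = true ∧ b (pw γ j).neg = false := by
  intro j hj
  induction j with
  | zero => omega
  | succ j ih =>
      by_cases hj1 : j = 0
      · subst hj1
        exact ⟨bF1a hand hb5 h, bF1b hb4 (by rw [hand]; exact h)⟩
      · obtain ⟨h1, h2⟩ := ih (by omega)
        have hq : (b (pw γ j) && b (pw γ j).neg) = false := by simp [h2]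
        have e : pw (pw γ j) 1 = pw γ (j+1) := pw_add γ j 1
        refine ⟨?_, ?_⟩
        · have := bF1a hand hb5 hq; rwa [e] at this
        · have := bF1b hb4 (γ := pw γ j) (by rw [hand]; exact hq)
          rwa [e] at this

include hand hb4 hb5 in
theorem bF3 {γ : PFs} (j : ℕ)
    (h : b (pw γ (j+1)) = false ∨ b (pw γ (j+1)).neg = true) :
    b (pw γ j) = true ∧ b (pw γ j).neg = true := by
  have key : b ((pw γ j).and (pw γ j).neg) = true := by
    rcases h with h | h
    · exact hb5 _ (by rwa [pw_succ] at h)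
    · exact hb4 _ (by rwa [pw_succ] at h)
  rw [hand] at key
  exact ⟨(Bool.and_eq_true _ _).mp key |>.1, (Bool.and_eq_true _ _).mp key |>.2⟩

include hand hb4 hb5 in
theorem bDown {γ : PFs} :
    ∀ m : ℕ, (b (pw γ (m+1)) = false ∨ b (pw γ (m+1)).neg = true) →
    ∀ k : ℕ, k ≤ m → b (pw γ k) = true ∧ b (pw γ k).neg = true := by
  intro m
  induction m with
  | zero =>
      intro h k hk
      interval_cases k
      exact bF3 hand hb4 hb5 0 h
  | succ m ih =>
      intro h k hk
      have hm1 := bF3 hand hb4 hb5 (m+1) h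
      by_cases hkm : k = m + 1
      · exact hkm ▸ hm1
      · exact ih (Or.inr hm1.2) k (by omega)

include hand hb4 hb5 in
theorem bUp {γ : PFs} {j : ℕ} (h : b (pw γ j) = false) :
    ∀ m : ℕ, j + 1 ≤ m → b (pw γ m) = true ∧ b (pw γ m).neg = false := by
  intro m hm
  have hq : (b (pw γ j) && b (pw γ j).neg) = false := by simp [h]
  have := bF2 hand hb4 hb5 hq (m - j) (by omega)
  rwa [pw_add, show j + (m - j) = m by omega] at this

include hand in
theorem bPcTrue {α : PFs} :
    ∀ m : ℕ, 1 ≤ m → (∀ j, 1 ≤ j → j ≤ m → b (pw α j) = true) →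
      b (pc α m) = true
  | 1, _, h => h 1 le_rfl le_rfl
  | (m+2), _, h => by
      have ih : b (pc α (m+1)) = true :=
        bPcTrue (m+1) (by omega) (fun j h1 h2 => h j h1 (by omega))
      show b ((pc α (m+1)).and (pw α (m+2))) = true
      rw [hand, ih, h (m+2) (by omega) le_rfl]
      rfl

include hand in
theorem bPcFalse {α : PFs} :
    ∀ m : ℕ, 1 ≤ m → ∀ j, 1 ≤ j → j ≤ m → b (pw α j) = false →
      b (pc α m) = false
  | 1, _, j, h1, h2, hj => by
      have : j = 1 := by omega
      subst this; exact hj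
  | (m+2), _, j, h1, h2, hj => by
      show b ((pc α (m+1)).and (pw α (m+2))) = false
      rw [hand]
      by_cases hjm : j = m + 2
      · rw [← hjm, hj]; simp
      · rw [bPcFalse (m+1) (by omega) j h1 (by omega) hj]; rfl

end BFacts

/-! ### Building a valuation in `F_{C_n}` from a bivaluation -/

/-- Coordinate function of the snapshot associated to `α` by a bivaluation. -/
def cfB (b : PFs → Bool) (α : PFs) (k : ℕ) : Bool :=
  if k = 1 then b α.neg else b (pw α (k-1))

def mkSnap (n : ℕ) (f : ℕ → Bool)
    (hf : ∀ k m : ℕ, k < m → m ≤ n → f k = false → f m = true) : Snap n :=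
  ⟨fun i => f i.val, by
    intro i j hi hj
    have hi' : f i.val = false := hi
    have hj' : f j.val = false := hj
    rcases Nat.lt_trichotomy i.val j.val with h | h | h
    · rw [hf i.val j.val h (by omega) hi'] at hj'; cases hj'
    · exact Fin.ext h
    · rw [hf j.val i.val h (by omega) hj'] at hi'; cases hi'⟩

section Model

variable {n : ℕ} (hn : 2 ≤ n)
variable {b : PFs → Bool}
variable (hand : ∀ α β, b (α.and β) = (b α && b β))
variable (hor : ∀ α β, b (α.or β) = (b α || b β))
variable (himp : ∀ α β, b (α.imp β) = (!b α || b β))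
variable (hb4 : ∀ α, b α.neg.neg = true → b α = true)
variable (hb5 : ∀ α, b α.neg = false → b α = true)
variable (h7 : ∀ γ, b (pc γ n) = true → (b γ && b γ.neg) = false)
variable (h8 : ∀ α β, b (pc α n) = true → b (pc β n) = true →
    b (pc (α.and β) n) = true ∧ b (pc (α.or β) n) = true ∧
    b (pc (α.imp β) n) = true)

include hand hb4 hb5 in
theorem cfB_mono (α : PFs) : ∀ k m : ℕ, k < m → m ≤ n →
    cfB b α k = false → cfB b α m = true := by
  intro k m hkm hmn hk
  rcases Nat.lt_trichotomy k 1 with h0 | h1 | h2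
  · -- k = 0 : b α = false
    have h0' : k = 0 := by omega
    subst h0'
    have hba : b α = false := by simpa [cfB] using hk
    have hneg : b α.neg = true := by
      by_contra hc
      have := hb5 α (by simpa using hc)
      rw [this] at hba; cases hba
    have hq : (b α && b α.neg) = false := by simp [hba]
    rcases Nat.lt_or_ge m 2 with hm2 | hm2
    · have : m = 1 := by omega
      subst this
      simpa [cfB] using hneg
    · have := (bF2 hand hb4 hb5 hq (m-1) (by omega)).1
      simpa [cfB, show m ≠ 1 by omega] using this
  · -- k = 1 : b α.neg = false
    subst h1
    have hneg : b α.neg = false := by simpa [cfB] using hk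
    have hba : b α = true := hb5 α hneg
    have hq : (b α && b α.neg) = false := by simp [hneg]
    have := (bF2 hand hb4 hb5 hq (m-1) (by omega)).1
    simpa [cfB, show m ≠ 1 by omega] using this
  · -- k ≥ 2
    have hk' : b (pw α (k-1)) = false := by
      simpa [cfB, show k ≠ 1 by omega] using hk
    have := (bUp hand hb4 hb5 hk' (m-1) (by omega)).1
    simpa [cfB, show m ≠ 1 by omega] using this

/-- The valuation associated to a bivaluation. -/
def nuB (n : ℕ) (b : PFs → Bool)
    (hmono : ∀ α, ∀ k m : ℕ, k < m → m ≤ n → cfB b α k = false → cfB b α m = true)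
    (α : PFs) : Snap n :=
  mkSnap n (cfB b α) (hmono α)

end Model


section Model2

variable {n : ℕ} (hn : 2 ≤ n)
variable {b : PFs → Bool}
variable (hand : ∀ α β, b (α.and β) = (b α && b β))
variable (hor : ∀ α β, b (α.or β) = (b α || b β))
variable (himp : ∀ α β, b (α.imp β) = (!b α || b β))
variable (hb4 : ∀ α, b α.neg.neg = true → b α = true)
variable (hb5 : ∀ α, b α.neg = false → b α = true)
variable (h7 : ∀ γ, b (pc γ n) = true → (b γ && b γ.neg) = false)
variable (h8 : ∀ α β, b (pc α n) = true → b (pc β n) = true →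
    b (pc (α.and β) n) = true ∧ b (pc (α.or β) n) = true ∧
    b (pc (α.imp β) n) = true)

include hn hand hor himp hb4 hb5 h7 h8 in
theorem modelB : ∃ ν : PFs → Snap n, FCn n ν ∧ ∀ α, (ν α).1 0 = b α := by
  classical
  have h1v : ((1 : Fin (n+1)) : ℕ) = 1 := by
    rw [Fin.val_one']
    exact Nat.mod_eq_of_lt (by omega)
  set V : PFs → Snap n :=
    nuB n b (fun α => cfB_mono hand hb4 hb5 α) with hV
  have hfst : ∀ α (i : Fin (n+1)), (V α).1 i = cfB b α i.val := fun _ _ => rfl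
  have h0 : ∀ α, (V α).1 0 = b α := by
    intro α; rw [hfst, Fin.val_zero]; simp [cfB]
  have h1 : ∀ α, (V α).1 1 = b α.neg := by
    intro α; rw [hfst, h1v]; simp [cfB]
  have hboo : ∀ α, (V α ∈ BooN n) ↔ (b α && b α.neg) = false := by
    intro α
    show ((V α).1 0 && (V α).1 1) = false ↔ _
    rw [h0, h1]
  have hQpc : ∀ α, (b α && b α.neg) = false → b (pc α n) = true := by
    intro α hq
    exact bPcTrue hand n (by omega) (fun j hj1 _ => (bF2 hand hb4 hb5 hq j hj1).1)
  have hboo3 : ∀ α β, V α ∈ BooN n → V β ∈ BooN n →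
      V (α.and β) ∈ BooN n ∧ V (α.or β) ∈ BooN n ∧ V (α.imp β) ∈ BooN n := by
    intro α β hA hB
    have qa := hQpc α ((hboo α).mp hA)
    have qb := hQpc β ((hboo β).mp hB)
    obtain ⟨p1, p2, p3⟩ := h8 α β qa qb
    exact ⟨(hboo _).mpr (h7 _ p1), (hboo _).mpr (h7 _ p2), (hboo _).mpr (h7 _ p3)⟩
  refine ⟨V, ⟨⟨?_, ?_, ?_, ?_⟩, ?_, ?_⟩, h0⟩
  · -- negN
    intro α
    refine ⟨?_, ?_⟩
    · rw [h0, h1]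
    · rw [h1, h0]; exact hb4 α
  · -- and
    intro α β
    unfold binN
    split_ifs with hB
    · exact ⟨(hboo3 α β hB.1 hB.2).1, by simp only [Set.mem_setOf_eq, h0]; exact hand α β⟩
    · show (V (α.and β)).1 0 = _
      simp only [h0]; exact hand α β
  · -- or
    intro α β
    unfold binN
    split_ifs with hB
    · exact ⟨(hboo3 α β hB.1 hB.2).2.1, by simp only [Set.mem_setOf_eq, h0]; exact hor α β⟩
    · show (V (α.or β)).1 0 = _
      simp only [h0]; exact hor α β
  · -- imp
    intro α β
    unfold binN
    split_ifs with hB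
    · exact ⟨(hboo3 α β hB.1 hB.2).2.2, by simp only [Set.mem_setOf_eq, h0]; exact himp α β⟩
    · show (V (α.imp β)).1 0 = _
      simp only [h0]; exact himp α β
  · -- restriction R1
    intro α h
    have hc : ∀ m : ℕ, m < n+1 → cfB b α m = decide (m ≠ 0 + 2) := by
      intro m hm
      exact congrFun (congrArg Subtype.val h) ⟨m, hm⟩
    have c0 : b α = true := by
      have := hc 0 (by omega); simpa [cfB] using this
    have c1 : b α.neg = true := by
      have := hc 1 (by omega); simpa [cfB] using this
    have z1 : b (pw α 1) = false := by
      have := hc 2 (by omega); simpa [cfB] using this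
    have hq : (b (α.and α.neg) && b (α.and α.neg).neg) = false := by
      have : b (α.and α.neg).neg = b (pw α 1) := rfl
      rw [this, z1]; simp
    apply Subtype.ext; funext i
    obtain ⟨m, hm⟩ := i
    show cfB b (α.and α.neg) m = decide (m ≠ 1)
    rcases Nat.lt_trichotomy m 1 with hm0 | hm1 | hm2
    · have : m = 0 := by omega
      subst this
      simp [cfB, hand, c0, c1]
    · subst hm1
      have : cfB b (α.and α.neg) 1 = b (pw α 1) := by simp [cfB]; rfl
      rw [this, z1]; simp
    · have : cfB b (α.and α.neg) m = b (pw (α.and α.neg) (m-1)) := by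
        simp [cfB, show m ≠ 1 by omega]
      rw [this, (bF2 hand hb4 hb5 hq (m-1) (by omega)).1]
      exact (decide_eq_true (by omega)).symm
  · -- restriction R2
    intro α k hk1 hk2 h
    have hc : ∀ m : ℕ, m < n+1 → cfB b α m = decide (m ≠ k + 2) := by
      intro m hm
      exact congrFun (congrArg Subtype.val h) ⟨m, hm⟩
    have c0 : b α = true := by
      have h' := hc 0 (by omega)
      rw [show cfB b α 0 = b α from by simp [cfB]] at h'
      rw [h']; exact decide_eq_true (by omega)
    have c1 : b α.neg = true := by
      have h' := hc 1 (by omega)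
      rw [show cfB b α 1 = b α.neg from by simp [cfB]] at h'
      rw [h']; exact decide_eq_true (by omega)
    have cj : ∀ j, 1 ≤ j → j ≤ n-1 → b (pw α j) = decide (j ≠ k+1) := by
      intro j hj1 hj2
      have := hc (j+1) (by omega)
      rw [show cfB b α (j+1) = b (pw α j) from by
        simp [cfB, show j+1 ≠ 1 by omega, show j ≠ 0 by omega]] at this
      rw [this]
      exact decide_eq_decide.mpr (by omega)
    have e1 : b (pw α 1) = true := by
      rw [cj 1 (by omega) (by omega)]; exact decide_eq_true (by omega)
    have Z : b (pw α (k+1)) = false := by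
      rcases Nat.lt_or_ge k (n-1) with hkn | hkn
      · rw [cj (k+1) (by omega) (by omega)]
        exact decide_eq_false (by omega)
      · -- k = n - 1
        by_contra hcc
        have ht : b (pw α (k+1)) = true := by simpa using hcc
        have hkn' : k = n - 1 := by omega
        have hpc : b (pc α n) = true := by
          refine bPcTrue hand n (by omega) (fun j hj1 hj2 => ?_)
          rcases Nat.lt_or_ge j n with hjn | hjn
          · rw [cj j hj1 (by omega)]
            exact decide_eq_true (by omega)
          · have : j = k + 1 := by omega
            rw [this]; exact ht
        have q := h7 α hpc
        rw [c0, c1] at q; cases q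
    have down := bDown hand hb4 hb5 k (Or.inl Z)
    constructor
    · -- InN
      constructor
      · intro he
        have h2 : cfB b (α.and α.neg) 1 = decide ((1:ℕ) ≠ 1) :=
          congrFun (congrArg Subtype.val he) ⟨1, by omega⟩
        rw [show cfB b (α.and α.neg) 1 = b (α.and α.neg).neg from by simp [cfB]] at h2
        have h3 : b (α.and α.neg).neg = b (pw α 1) := rfl
        rw [h3, e1] at h2
        simp at h2
      · intro he
        have h2 : cfB b (α.and α.neg) 0 = decide ((0:ℕ) ≠ 0) :=
          congrFun (congrArg Subtype.val he) ⟨0, by omega⟩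
        simp [cfB, hand, c0, c1] at h2
    · -- ν (α^1) = tval n (k-1)
      apply Subtype.ext; funext i
      obtain ⟨m, hm⟩ := i
      show cfB b (pw α 1) m = decide (m ≠ k - 1 + 2)
      rw [show k - 1 + 2 = k + 1 by omega]
      rcases Nat.lt_trichotomy m 1 with hm0 | hm1 | hm2
      · have : m = 0 := by omega
        subst this
        have : cfB b (pw α 1) 0 = b (pw α 1) := by simp [cfB]
        rw [this, e1]
        exact (decide_eq_true (by omega)).symm
      · subst hm1
        have : cfB b (pw α 1) 1 = b (pw α 1).neg := by simp [cfB]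
        rw [this, (down 1 (by omega)).2]
        exact (decide_eq_true (by omega)).symm
      · have hcf : cfB b (pw α 1) m = b (pw α m) := by
          simp only [cfB, if_neg (by omega : ¬ m = 1)]
          rw [pw_add, show 1 + (m-1) = m by omega]
        rw [hcf]
        rcases Nat.lt_or_ge m n with hmn | hmn
        · exact cj m (by omega) (by omega)
        · have hmn' : m = n := by omega
          rcases Nat.lt_or_ge k (n-1) with hkn | hkn
          · rw [hmn', (bUp hand hb4 hb5 Z n (by omega)).1]
            exact (decide_eq_true (by omega)).symm
          · have : k = n - 1 := by omega
            rw [hmn', show n = k + 1 by omega, Z]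
            exact (decide_eq_false (by omega)).symm

end Model2


/-! ### Soundness with respect to `RM_{C_n}` -/

section Sound

variable {n : ℕ} (hn : 2 ≤ n) {ν : PFs → Snap n} (hν : FCn n ν)

include hn in
theorem snapSnd {z : Snap n} (h : z.1 0 = false) : z.1 1 = true := by
  by_contra hc
  have h1 : z.1 1 = false := by simpa using hc
  have h2 := z.2 0 1 h h1
  have h3 := congrArg Fin.val h2
  rw [Fin.val_zero, Fin.val_one', Nat.mod_eq_of_lt (by omega)] at h3
  cases h3

theorem binN_fst {f : Bool → Bool → Bool} {z w u : Snap n}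
    (h : u ∈ binN f z w) : u.1 0 = f (z.1 0) (w.1 0) := by
  unfold binN at h
  split_ifs at h with hc
  · exact h.2
  · exact h

theorem binN_boo {f : Bool → Bool → Bool} {z w u : Snap n}
    (hz : z ∈ BooN n) (hw : w ∈ BooN n) (h : u ∈ binN f z w) : u ∈ BooN n := by
  unfold binN at h
  rw [if_pos ⟨hz, hw⟩] at h
  exact h.1

include hν in
theorem fneg (α : PFs) : (ν α.neg).1 0 = (ν α).1 1 := (hν.1.1 α).1

include hν in
theorem fneg2 (α : PFs) : (ν α.neg).1 1 = true → (ν α).1 0 = true := (hν.1.1 α).2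

include hν in
theorem fand (α β : PFs) : (ν (α.and β)).1 0 = ((ν α).1 0 && (ν β).1 0) :=
  binN_fst (hν.1.2.1 α β)

include hν in
theorem forr (α β : PFs) : (ν (α.or β)).1 0 = ((ν α).1 0 || (ν β).1 0) :=
  binN_fst (hν.1.2.2.1 α β)

include hν in
theorem fimp (α β : PFs) : (ν (α.imp β)).1 0 = (!(ν α).1 0 || (ν β).1 0) :=
  binN_fst (hν.1.2.2.2 α β)

include hn in
theorem notBoo_cases {z : Snap n} (hz : z ∉ BooN n) :
    ∃ k, k ≤ n - 1 ∧ z = tval n k := by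
  have h1v : ((1 : Fin (n+1)) : ℕ) = 1 := by
    rw [Fin.val_one']; exact Nat.mod_eq_of_lt (by omega)
  have h0 : z.1 0 = true ∧ z.1 1 = true := by
    have hz' : ¬ ((z.1 0 && z.1 1) = false) := hz
    cases b0 : z.1 0 <;> cases b1 : z.1 1 <;> simp_all
  by_cases hall : ∀ i : Fin (n+1), z.1 i = true
  · refine ⟨n-1, le_rfl, ?_⟩
    apply Subtype.ext; funext i
    rw [hall i]
    exact (decide_eq_true (by omega : (i : ℕ) ≠ n - 1 + 2)).symm
  · push_neg at hall
    obtain ⟨i, hi⟩ := hall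
    have hif : z.1 i = false := by simpa using hi
    have hi2 : 2 ≤ (i : ℕ) := by
      by_contra hlt
      rcases Nat.lt_or_ge (i : ℕ) 1 with hI | hI
      · have : i = 0 := Fin.ext (by rw [Fin.val_zero]; omega)
        rw [this, h0.1] at hif; cases hif
      · have : i = 1 := Fin.ext (by rw [h1v]; omega)
        rw [this, h0.2] at hif; cases hif
    refine ⟨(i : ℕ) - 2, by omega, ?_⟩
    apply Subtype.ext; funext j
    show z.1 j = decide ((j : ℕ) ≠ (i : ℕ) - 2 + 2)
    rw [show (i : ℕ) - 2 + 2 = (i : ℕ) by omega]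
    by_cases hji : j = i
    · subst hji
      rw [hif]
      exact (decide_eq_false (by omega)).symm
    · have hjt : z.1 j = true := by
        by_contra hc
        have : z.1 j = false := by simpa using hc
        exact hji (z.2 j i this hif)
      rw [hjt]
      refine (decide_eq_true ?_).symm
      intro he
      exact hji (Fin.ext he)

include hn hν in
theorem powFalse : ∀ k, k ≤ n - 1 → ∀ α, ν α = tval n k →
    (ν (pw α (k+1))).1 0 = false := by
  have h1v : ((1 : Fin (n+1)) : ℕ) = 1 := by
    rw [Fin.val_one']; exact Nat.mod_eq_of_lt (by omega)
  intro k
  induction k with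
  | zero =>
      intro _ α h
      have hT := hν.2.1 α h
      have e : (ν (pw α 1)).1 0 = (ν (α.and α.neg)).1 1 := (hν.1.1 (α.and α.neg)).1
      rw [e, hT]
      show decide (((1 : Fin (n+1)) : ℕ) ≠ 1) = false
      rw [h1v]
      exact decide_eq_false (by omega)
  | succ k ih =>
      intro hk α h
      have hR := (hν.2.2 α (k+1) (by omega) (by omega) h).2
      have := ih (by omega) (pw α 1) hR
      rwa [pw_add, show 1 + (k+1) = k + 1 + 1 by omega] at this

include hn hν in
theorem pcBool (α : PFs) (h : (ν (pc α n)).1 0 = true) : ν α ∈ BooN n := by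
  by_contra hB
  obtain ⟨k, hk, he⟩ := notBoo_cases hn hB
  have hf := powFalse hn hν k hk α he
  have hpc := bPcFalse (b := fun γ => (ν γ).1 0) (fand hν) n (by omega)
    (k+1) (by omega) (by omega) hf
  have hpc' : (ν (pc α n)).1 0 = false := hpc
  rw [h] at hpc'; cases hpc' 

include hn hν in
theorem booStep (γ : PFs) (hγ : ν γ ∈ BooN n) :
    ν (pw γ 1) ∈ BooN n ∧ (ν (pw γ 1)).1 0 = true := by
  have hw : (ν (γ.and γ.neg)).1 0 = false := by
    rw [fand hν, fneg hν]
    exact hγ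
  have hw2 : (ν (γ.and γ.neg)).1 1 = true := snapSnd hn hw
  have e0 : (ν (pw γ 1)).1 0 = (ν (γ.and γ.neg)).1 1 := (hν.1.1 (γ.and γ.neg)).1
  have e1 : (ν (pw γ 1)).1 1 = false := by
    by_contra hc
    have : (ν (pw γ 1)).1 1 = true := by simpa using hc
    have := (hν.1.1 (γ.and γ.neg)).2 this
    rw [hw] at this; cases this
  constructor
  · show ((ν (pw γ 1)).1 0 && (ν (pw γ 1)).1 1) = false
    rw [e1]; simp
  · rw [e0, hw2]

include hn hν in
theorem booPow (γ : PFs) (hγ : ν γ ∈ BooN n) :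
    ∀ j, 1 ≤ j → ν (pw γ j) ∈ BooN n ∧ (ν (pw γ j)).1 0 = true := by
  intro j hj
  induction j with
  | zero => omega
  | succ j ih =>
      by_cases hj0 : j = 0
      · subst hj0; exact booStep hn hν γ hγ
      · obtain ⟨hB, _⟩ := ih (by omega)
        have := booStep hn hν (pw γ j) hB
        rwa [pw_add, show j + 1 = j + 1 from rfl] at this

include hn hν in
theorem booPc (γ : PFs) (hγ : ν γ ∈ BooN n) : (ν (pc γ n)).1 0 = true :=
  bPcTrue (b := fun δ => (ν δ).1 0) (fand hν) n (by omega)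
    (fun j hj1 _ => (booPow hn hν γ hγ j hj1).2)

include hn hν in
theorem soundAll {Γ : Set PFs} {φ : PFs} (hp : ProvCn n Γ φ)
    (hΓ : ∀ γ ∈ Γ, ν γ ∈ Dn n) : ν φ ∈ Dn n := by
  induction hp with
  | prem h => exact hΓ _ h
  | ax1 α β =>
      show (ν _).1 0 = true
      rw [fimp hν, fimp hν]
      cases (ν α).1 0 <;> cases (ν β).1 0 <;> rfl
  | ax2 α β γ =>
      show (ν _).1 0 = true
      rw [fimp hν, fimp hν, fimp hν, fimp hν, fimp hν, fimp hν]
      cases (ν α).1 0 <;> cases (ν β).1 0 <;> cases (ν γ).1 0 <;> rfl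
  | ax3 α β =>
      show (ν _).1 0 = true
      rw [fimp hν, fimp hν, fand hν]
      cases (ν α).1 0 <;> cases (ν β).1 0 <;> rfl
  | ax4 α β =>
      show (ν _).1 0 = true
      rw [fimp hν, fand hν]
      cases (ν α).1 0 <;> cases (ν β).1 0 <;> rfl
  | ax5 α β =>
      show (ν _).1 0 = true
      rw [fimp hν, fand hν]
      cases (ν α).1 0 <;> cases (ν β).1 0 <;> rfl
  | ax6 α β =>
      show (ν _).1 0 = true
      rw [fimp hν, forr hν]
      cases (ν α).1 0 <;> cases (ν β).1 0 <;> rfl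
  | ax7 α β =>
      show (ν _).1 0 = true
      rw [fimp hν, forr hν]
      cases (ν α).1 0 <;> cases (ν β).1 0 <;> rfl
  | ax8 α β γ =>
      show (ν _).1 0 = true
      rw [fimp hν, fimp hν, fimp hν, fimp hν, fimp hν, forr hν]
      cases (ν α).1 0 <;> cases (ν β).1 0 <;> cases (ν γ).1 0 <;> rfl
  | ax9 α =>
      show (ν _).1 0 = true
      rw [forr hν, fneg hν]
      cases h0 : (ν α).1 0
      · rw [snapSnd hn h0]; rfl
      · rfl
  | ax10 α =>
      show (ν _).1 0 = true
      rw [fimp hν, fneg hν]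
      cases h1 : (ν α.neg).1 1
      · rfl
      · rw [fneg2 hν α h1]; rfl
  | bcn α β =>
      show (ν _).1 0 = true
      rw [fimp hν, fimp hν, fimp hν, fneg hν]
      cases hp : (ν (pc α n)).1 0
      · rfl
      · have hB : ((ν α).1 0 && (ν α).1 1) = false := pcBool hn hν α hp
        cases h0 : (ν α).1 0
        · rfl
        · rw [h0] at hB
          simp at hB
          rw [hB]
          cases (ν β).1 0 <;> rfl
  | pn α β =>
      show (ν _).1 0 = true
      rw [fimp hν, fand hν]
      cases hp : ((ν (pc α n)).1 0 && (ν (pc β n)).1 0)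
      · rfl
      · have hpa : (ν (pc α n)).1 0 = true := by
          cases hA : (ν (pc α n)).1 0 <;> simp_all
        have hpb : (ν (pc β n)).1 0 = true := by
          cases hA : (ν (pc β n)).1 0 <;> simp_all
        have bA := pcBool hn hν α hpa
        have bB := pcBool hn hν β hpb
        have b1 : ν (α.and β) ∈ BooN n := binN_boo bA bB (hν.1.2.1 α β)
        have b2 : ν (α.or β) ∈ BooN n := binN_boo bA bB (hν.1.2.2.1 α β)
        have b3 : ν (α.imp β) ∈ BooN n := binN_boo bA bB (hν.1.2.2.2 α β)
        rw [fand hν, fand hν, booPc hn hν _ b1, booPc hn hν _ b2, booPc hn hν _ b3]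
        rfl
  | mp h1 h2 ih1 ih2 =>
      have e1 : (ν _).1 0 = true := ih1
      have e2 : (ν _).1 0 = true := ih2
      rw [fimp hν] at e1
      show (ν _).1 0 = true
      rw [e2] at e1
      simpa using e1

end Sound

/-- Soundness and completeness of `C_n` with respect to the
RNmatrix `RM_{C_n}`: `Γ ⊢_{C_n} φ` iff for every `ν ∈ F_{C_n}` with
`ν[Γ] ⊆ D_n` one has `ν(φ) ∈ D_n`. -/
theorem stmt_14 (n : ℕ) (hn : 2 ≤ n) (Γ : Set PFs) (φ : PFs) :
    ProvCn n Γ φ ↔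
      ∀ ν : PFs → Snap n, FCn n ν → (∀ γ ∈ Γ, ν γ ∈ Dn n) → ν φ ∈ Dn n := by
  classical
  constructor
  · intro hp ν hν hΓ
    exact soundAll hn hν hp hΓ
  · intro hsem
    by_contra hnp
    obtain ⟨Δ, hΓΔ, hND, hM⟩ := lindenbaum hnp
    set b : PFs → Bool := fun α => decide (α ∈ Δ) with hb
    have hand : ∀ α β, b (α.and β) = (b α && b β) := by
      intro α β
      have hiff := maxAnd (φ := φ) hND hM (α := α) (β := β)
      by_cases ha : α ∈ Δ <;> by_cases hc : β ∈ Δ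
      · simp [hb, ha, hc, hiff.mpr ⟨ha, hc⟩]
      · have hno : α.and β ∉ Δ := fun h => hc (hiff.mp h).2
        simp [hb, ha, hc, hno]
      · have hno : α.and β ∉ Δ := fun h => ha (hiff.mp h).1
        simp [hb, ha, hc, hno]
      · have hno : α.and β ∉ Δ := fun h => ha (hiff.mp h).1
        simp [hb, ha, hc, hno]
    have hor : ∀ α β, b (α.or β) = (b α || b β) := by
      intro α β
      have hiff := maxOr (φ := φ) hND hM (α := α) (β := β)
      by_cases ha : α ∈ Δ <;> by_cases hc : β ∈ Δ
      · simp [hb, ha, hc, hiff.mpr (Or.inl ha)]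
      · simp [hb, ha, hc, hiff.mpr (Or.inl ha)]
      · simp [hb, ha, hc, hiff.mpr (Or.inr hc)]
      · have hno : α.or β ∉ Δ := fun h => (hiff.mp h).elim ha hc
        simp [hb, ha, hc, hno]
    have himp : ∀ α β, b (α.imp β) = (!b α || b β) := by
      intro α β
      have hiff := maxImp (φ := φ) hND hM (by omega : 1 ≤ n) (α := α) (β := β)
      by_cases ha : α ∈ Δ <;> by_cases hc : β ∈ Δ
      · simp [hb, ha, hc, hiff.mpr (Or.inr hc)]
      · have hno : α.imp β ∉ Δ := fun h => (hiff.mp h).elim (fun h' => h' ha) hc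
        simp [hb, ha, hc, hno]
      · simp [hb, ha, hc, hiff.mpr (Or.inr hc)]
      · simp [hb, ha, hc, hiff.mpr (Or.inl ha)]
    have hb4 : ∀ α, b α.neg.neg = true → b α = true := by
      intro α h
      exact decide_eq_true (maxNegNeg hND hM (of_decide_eq_true h))
    have hb5 : ∀ α, b α.neg = false → b α = true := by
      intro α h
      exact decide_eq_true (maxNeg hND hM (of_decide_eq_false h))
    have h7 : ∀ γ, b (pc γ n) = true → (b γ && b γ.neg) = false := by
      intro γ h
      by_contra hq
      have h1 : b γ = true ∧ b γ.neg = true := by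
        cases c1 : b γ <;> cases c2 : b γ.neg <;> simp_all
      exact maxBcn hND (of_decide_eq_true h) (of_decide_eq_true h1.1)
        (of_decide_eq_true h1.2)
    have h8 : ∀ α β, b (pc α n) = true → b (pc β n) = true →
        b (pc (α.and β) n) = true ∧ b (pc (α.or β) n) = true ∧
        b (pc (α.imp β) n) = true := by
      intro α β ha hbb
      obtain ⟨p1, p2, p3⟩ := maxPn hND hM (of_decide_eq_true ha) (of_decide_eq_true hbb)
      exact ⟨decide_eq_true p1, decide_eq_true p2, decide_eq_true p3⟩
    obtain ⟨ν, hν, hb0⟩ := modelB hn hand hor himp hb4 hb5 h7 h8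
    have hmem : ν φ ∈ Dn n := by
      refine hsem ν hν ?_
      intro γ hγ
      show (ν γ).1 0 = true
      rw [hb0]
      exact decide_eq_true (hΓΔ hγ)
    have hφ : (ν φ).1 0 = true := hmem
    rw [hb0] at hφ
    exact maxNotPhi hND (of_decide_eq_true hφ)
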